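/- arXiv:2509.00032 — 3 statements merged into one kernel-verified Lean document; each statement's English description precedes it below -/
import Mathlib

section
/- Let α = ω₁ with open sets the ordinals ≤ ω₁. No cover 𝒰 ⊆ τ \ {ω₁} of ω₁ is a γ-cover: there is no infinite cover 𝒰 such that for every x ∈ ω₁ the set 𝒰 \ 𝒰_x of members not containing x is finite. -/
open Ordinal Set

/-- no cover of ω₁ by proper open down-sets is a γ-cover. -/
theorem stmt3 (𝒰 : Set Ordinal) (hsub : ∀ U ∈ 𝒰, U < Ordinal.omega 1)
    (hcov : ∀ x < Ordinal.omega 1, ∃ U ∈ 𝒰, x < U) :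
    ¬ (𝒰.Infinite ∧ ∀ x < Ordinal.omega 1, {U ∈ 𝒰 | ¬ x < U}.Finite) := by
  rintro ⟨hinf, hfin⟩
  -- 𝒰 is countable: U ↦ number of members ≤ U is strictly monotone on 𝒰
  set g : Ordinal → ℕ := fun U => {V ∈ 𝒰 | ¬ U < V}.ncard with hg
  have hmono : ∀ U ∈ 𝒰, ∀ V ∈ 𝒰, U < V → g U < g V := by
    intro U hU V hV hUV
    apply Set.ncard_lt_ncard
    · constructor
      · intro W hW
        exact ⟨hW.1, fun h => hW.2 (hUV.trans h)⟩
      · intro h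
        have : V ∈ {W ∈ 𝒰 | ¬ U < W} := h ⟨hV, lt_irrefl V⟩
        exact this.2 hUV
    · exact hfin V (hsub V hV)
  have hcnt : 𝒰.Countable := by
    rw [Set.countable_iff_exists_injOn]
    refine ⟨g, fun U hU V hV hUVg => ?_⟩
    rcases lt_trichotomy U V with h | h | h
    · exact absurd hUVg (ne_of_lt (hmono U hU V hV h))
    · exact h
    · exact absurd hUVg.symm (ne_of_lt (hmono V hV U hU h))
  obtain ⟨f, hf⟩ := hcnt.exists_surjective hinf.nonempty
  set o : ℕ → Ordinal := fun n => (f n : Ordinal) with ho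
  have hlt : ∀ n, o n < (Cardinal.aleph 1).ord := by
    intro n
    rw [Cardinal.ord_aleph]
    exact hsub _ (f n).2
  have hsup : iSup o < (Cardinal.aleph 1).ord := by
    rw [Cardinal.ord_aleph]
    exact Ordinal.iSup_lt_omega_one (fun n => by simpa [Cardinal.ord_aleph] using hlt n)
  have : Ordinal.omega 1 ≤ iSup o := by
    apply le_of_forall_lt
    intro x hx
    obtain ⟨U, hU, hxU⟩ := hcov x hx
    obtain ⟨n, hn⟩ := hf ⟨U, hU⟩
    calc x < U := hxU
      _ = o n := by rw [ho]; simp [hn]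
      _ ≤ iSup o := Ordinal.le_iSup o n
  rw [Cardinal.ord_aleph] at hsup
  exact absurd (this.trans_lt hsup) (lt_irrefl _)
end

section
/- The space ω₁ with topology consisting of the ordinals ≤ ω₁ satisfies the selection principle (Ω choose T): every ω-cover contains a subfamily (namely itself) that is a t-cover. -/
open Ordinal Set

/-- the space ω₁ (points: ordinals < ω₁; open sets: ordinals ≤ ω₁,
each identified with its set of predecessors, so `x ∈ U` means `x < U`)
satisfies (Ω choose T): every ω-cover has a t-subcover. -/
theorem stmt8 :
    ∀ 𝒰 : Set Ordinal,
      (∀ U ∈ 𝒰, U < Ordinal.omega 1) →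
      (∀ x < Ordinal.omega 1, ∃ U ∈ 𝒰, x < U) →
      (∀ S : Finset Ordinal, (∀ s ∈ S, s < Ordinal.omega 1) →
        ∃ U ∈ 𝒰, ∀ s ∈ S, s < U) →
      ∃ 𝒱 ⊆ 𝒰,
        (∀ x < Ordinal.omega 1, ∃ U ∈ 𝒱, x < U) ∧
        (∀ x < Ordinal.omega 1, {U ∈ 𝒱 | x < U}.Infinite) ∧
        (∀ x y : Ordinal, x < Ordinal.omega 1 → y < Ordinal.omega 1 →
          ({U ∈ 𝒱 | x < U} \ {U ∈ 𝒱 | y < U}).Finite ∨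
          ({U ∈ 𝒱 | y < U} \ {U ∈ 𝒱 | x < U}).Finite) := by
  intro 𝒰 hlt hcov homega
  refine ⟨𝒰, subset_rfl, hcov, ?_, ?_⟩
  · -- each star is infinite
    intro x hx hfin
    obtain ⟨U0, hU0, hxU0⟩ := hcov x hx
    have hne : ({U ∈ 𝒰 | x < U}).Nonempty := ⟨U0, hU0, hxU0⟩
    obtain ⟨M, hM, hmax⟩ : ∃ M ∈ {U ∈ 𝒰 | x < U}, ∀ U ∈ {U ∈ 𝒰 | x < U}, id M ≤ id U → id M = id U := by
      obtain ⟨M, hM, hmax⟩ := Set.Finite.exists_maximalFor id _ hfin hne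
      exact ⟨M, hM, fun U hU h => le_antisymm h (hmax hU h)⟩
    obtain ⟨U, hU, hMU⟩ := homega ({M} : Finset Ordinal) (by
      intro s hs
      simp only [Finset.mem_singleton] at hs
      rw [hs]
      exact hlt M hM.1)
    have hMU' : M < U := hMU M (Finset.mem_singleton_self M)
    have hUin : U ∈ {U ∈ 𝒰 | x < U} := ⟨hU, lt_trans hM.2 hMU'⟩
    exact absurd (hmax U hUin (le_of_lt hMU')) (ne_of_lt hMU')
  · intro x y hx hy
    rcases le_total x y with h | h
    · right
      refine Set.Finite.subset (Set.finite_empty) ?_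
      rintro U ⟨⟨hU, hyU⟩, hn⟩
      exact absurd ⟨hU, lt_of_le_of_lt h hyU⟩ hn
    · left
      refine Set.Finite.subset (Set.finite_empty) ?_
      rintro U ⟨⟨hU, hxU⟩, hn⟩
      exact absurd ⟨hU, lt_of_le_of_lt h hxU⟩ hn
end

section
/- There exists a topological space satisfying (Ω choose T) but not (Ω choose Γ); hence the selection principles (Ω choose T) and (Ω choose Γ) are not equivalent. -/
/-- An open cover of `X`: a family of open sets, not containing `X` itself,
whose union is `X`. -/
def IsCover {X : Type*} [TopologicalSpace X] (𝒰 : Set (Set X)) : Prop :=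
  (∀ U ∈ 𝒰, IsOpen U) ∧ Set.univ ∉ 𝒰 ∧ ⋃₀ 𝒰 = Set.univ

/-- The star of `x` with respect to `𝒰`. -/
def star' {X : Type*} (𝒰 : Set (Set X)) (x : X) : Set (Set X) := {U ∈ 𝒰 | x ∈ U}

/-- A large cover: every star is infinite. -/
def IsLargeCover {X : Type*} [TopologicalSpace X] (𝒰 : Set (Set X)) : Prop :=
  IsCover 𝒰 ∧ ∀ x : X, (star' 𝒰 x).Infinite

/-- An ω-cover: every finite set of points lies inside a single member. -/
def IsOmegaCover {X : Type*} [TopologicalSpace X] (𝒰 : Set (Set X)) : Prop :=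
  IsCover 𝒰 ∧ ∀ S : Finset X, ∃ U ∈ 𝒰, ↑S ⊆ U

/-- A t-cover: a large cover such that for all `x, y` at least one of the
star-differences is finite. -/
def IsTCover {X : Type*} [TopologicalSpace X] (𝒰 : Set (Set X)) : Prop :=
  IsLargeCover 𝒰 ∧ ∀ x y : X,
    (star' 𝒰 x \ star' 𝒰 y).Finite ∨ (star' 𝒰 y \ star' 𝒰 x).Finite

/-- A γ-cover: an infinite cover such that every point lies in all but
finitely many members. -/
def IsGammaCover {X : Type*} [TopologicalSpace X] (𝒰 : Set (Set X)) : Prop :=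
  IsCover 𝒰 ∧ 𝒰.Infinite ∧ ∀ x : X, (𝒰 \ star' 𝒰 x).Finite

open Set TopologicalSpace

noncomputable section

/-- Injectivity of Iio on ordinals. -/
lemma myIio_inj : Function.Injective (Set.Iio : Ordinal.{0} → Set Ordinal.{0}) := by
  intro a b h
  by_contra hne
  rcases lt_or_gt_of_ne hne with hl | hl
  · have : a ∈ Set.Iio b := hl
    rw [← h] at this; exact lt_irrefl a this
  · have : b ∈ Set.Iio a := hl
    rw [h] at this; exact lt_irrefl b this

lemma open_char {U : Set Ordinal.{0}}
    (h : GenerateOpen {s : Set Ordinal.{0} | ∃ β, s = Set.Iio β} U) :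
    U = Set.univ ∨ ∃ β, U = Set.Iio β := by
  induction h with
  | basic s hs => exact Or.inr hs
  | univ => exact Or.inl rfl
  | inter s t _ _ ihs iht =>
    rcases ihs with rfl | ⟨a, rfl⟩
    · simpa using iht
    rcases iht with rfl | ⟨b, rfl⟩
    · right; exact ⟨a, by simp⟩
    · right; exact ⟨a ⊓ b, Set.Iio_inter_Iio⟩
  | sUnion S _ ih =>
    by_cases hu : Set.univ ∈ S
    · left; exact (Set.eq_univ_of_univ_subset (Set.subset_sUnion_of_mem hu))
    have hS : ∀ s ∈ S, ∃ β, s = Set.Iio β := by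
      intro s hs
      rcases ih s hs with rfl | h
      · exact absurd hs hu
      · exact h
    have hun : ⋃₀ S = {x | ∃ β ∈ {β : Ordinal.{0} | Set.Iio β ∈ S}, x < β} := by
      ext x; constructor
      · rintro ⟨s, hsS, hxs⟩
        rcases hS s hsS with ⟨β, rfl⟩
        exact ⟨β, hsS, hxs⟩
      · rintro ⟨β, hβ, hx⟩
        exact ⟨Set.Iio β, hβ, hx⟩
    set B := {β : Ordinal.{0} | Set.Iio β ∈ S} with hB
    by_cases hne : B.Nonempty
    · by_cases hbd : BddAbove B
      · right; refine ⟨sSup B, ?_⟩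
        rw [hun]; ext x
        simp only [Set.mem_setOf_eq, Set.mem_Iio]
        exact (lt_csSup_iff hbd hne).symm
      · left
        rw [hun]; ext x
        simp only [Set.mem_setOf_eq, Set.mem_univ, iff_true]
        rcases not_bddAbove_iff.mp hbd x with ⟨β, hβ, hx⟩
        exact ⟨β, hβ, hx⟩
    · right; refine ⟨0, ?_⟩
      rw [hun]; ext x
      simp only [Set.mem_setOf_eq, Set.mem_Iio, not_lt_zero, iff_false]
      rintro ⟨β, hβ, -⟩
      exact hne ⟨β, hβ⟩

/-- there is a topological space satisfying (Ω choose T) but not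
(Ω choose Γ); the two selection principles are not equivalent. -/
theorem stmt11 : ∃ (X : Type 1) (_ : TopologicalSpace X),
    (∀ 𝒰 : Set (Set X), IsOmegaCover 𝒰 → ∃ 𝒱 ⊆ 𝒰, IsTCover 𝒱) ∧
    ¬ (∀ 𝒰 : Set (Set X), IsOmegaCover 𝒰 → ∃ 𝒱 ⊆ 𝒰, IsGammaCover 𝒱) := by
  refine ⟨Ordinal.{0}, generateFrom {s : Set Ordinal.{0} | ∃ β, s = Set.Iio β}, ?_, ?_⟩
  · -- Ω choose T
    intro 𝒰 h𝒰
    obtain ⟨⟨hopen, hnuniv, hcover⟩, homega⟩ := h𝒰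
    have hform : ∀ U ∈ 𝒰, ∃ β, U = Set.Iio β := by
      intro U hU
      refine (open_char (hopen U hU)).resolve_left ?_
      rintro rfl; exact hnuniv hU
    refine ⟨𝒰, subset_rfl, ⟨⟨⟨hopen, hnuniv, hcover⟩, ?_⟩, ?_⟩⟩
    · -- stars infinite
      intro x
      intro hfin
      have hTim : star' 𝒰 x = Set.Iio '' {β : Ordinal.{0} | Set.Iio β ∈ 𝒰 ∧ x < β} := by
        ext U; constructor
        · rintro ⟨hU, hxU⟩
          rcases hform U hU with ⟨β, rfl⟩
          exact ⟨β, ⟨hU, hxU⟩, rfl⟩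
        · rintro ⟨β, ⟨hU, hx⟩, rfl⟩; exact ⟨hU, hx⟩
      have hTfin : {β : Ordinal.{0} | Set.Iio β ∈ 𝒰 ∧ x < β}.Finite := by
        refine Set.Finite.of_finite_image ?_ (myIio_inj.injOn)
        rw [← hTim]; exact hfin
      obtain ⟨b, hb⟩ := hTfin.bddAbove
      obtain ⟨U, hU, hSU⟩ := homega {x, b}
      rcases hform U hU with ⟨β, rfl⟩
      have hxβ : x < β := hSU (by simp)
      have hbβ : b < β := hSU (by simp)
      exact absurd (hb ⟨hU, hxβ⟩) (not_le.mpr hbβ)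
    · -- t-condition
      have hmono : ∀ x y : Ordinal.{0}, x ≤ y → star' 𝒰 y ⊆ star' 𝒰 x := by
        rintro x y hxy U ⟨hU, hyU⟩
        rcases hform U hU with ⟨β, rfl⟩
        exact ⟨hU, lt_of_le_of_lt hxy hyU⟩
      intro x y
      rcases le_total x y with h | h
      · right
        have : star' 𝒰 y \ star' 𝒰 x = ∅ := Set.diff_eq_empty.mpr (hmono x y h)
        rw [this]; exact Set.finite_empty
      · left
        have : star' 𝒰 x \ star' 𝒰 y = ∅ := Set.diff_eq_empty.mpr (hmono y x h)
        rw [this]; exact Set.finite_empty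
  · -- ¬ (Ω choose Γ)
    intro hcontra
    have homega2 : @IsOmegaCover Ordinal.{0} (generateFrom {s : Set Ordinal.{0} | ∃ β, s = Set.Iio β}) {U : Set Ordinal.{0} | ∃ β, U = Set.Iio β} := by
      refine ⟨⟨?_, ?_, ?_⟩, ?_⟩
      · rintro U ⟨β, rfl⟩
        exact isOpen_generateFrom_of_mem ⟨β, rfl⟩
      · rintro ⟨β, hβ⟩
        have h2 := Set.mem_univ β
        rw [hβ] at h2
        exact lt_irrefl β h2
      · ext x
        simp only [Set.mem_univ, iff_true, Set.mem_sUnion]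
        exact ⟨Set.Iio (Order.succ x), ⟨Order.succ x, rfl⟩, Order.lt_succ x⟩
      · intro S
        obtain ⟨b, hb⟩ := S.finite_toSet.bddAbove
        refine ⟨Set.Iio (Order.succ b), ⟨Order.succ b, rfl⟩, ?_⟩
        intro y hy
        exact lt_of_le_of_lt (hb hy) (Order.lt_succ b)
    obtain ⟨V, hVsub, ⟨-, hVinf, hVgamma⟩⟩ :=
      hcontra {U : Set Ordinal.{0} | ∃ β, U = Set.Iio β} homega2
    have hT : {β : Ordinal.{0} | Set.Iio β ∈ V}.Infinite := by
      intro hfin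
      apply hVinf
      refine Set.Finite.subset (hfin.image Set.Iio) ?_
      intro U hU
      rcases hVsub hU with ⟨β, rfl⟩
      exact ⟨β, hU, rfl⟩
    set f := hT.natEmbedding with hf
    set g : ℕ → Ordinal.{0} := fun n => (f n : Ordinal.{0}) with hg
    have hginj : Function.Injective g :=
      Subtype.coe_injective.comp f.injective
    have hbdd : BddAbove (Set.range g) := Ordinal.bddAbove_range g
    set x := sSup (Set.range g) with hx
    have hsub : Set.range (fun n => Set.Iio (g n)) ⊆ V \ star' V x := by
      rintro U ⟨n, rfl⟩
      have hmem : Set.Iio (g n) ∈ V := (f n).2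
      refine ⟨hmem, ?_⟩
      rintro ⟨-, hxU⟩
      exact absurd (le_csSup hbdd ⟨n, rfl⟩) (not_le.mpr hxU)
    have hinf : (Set.range (fun n => Set.Iio (g n))).Infinite :=
      Set.infinite_range_of_injective (myIio_inj.comp hginj)
    exact absurd (hVgamma x) (hinf.mono hsub)

end
end
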